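/- Let p be a prime number, M the ℤ-module ℤ(p^∞) (the Prüfer p-group, i.e. the p-primary component of ℚ/ℤ), and S = {p^n : n ∈ ℕ ∪ {0}} the multiplicatively closed subset of ℤ generated by p. Then M is a fully S-idempotent ℤ-module but M is not a fully idempotent ℤ-module. -/

import Mathlib

open Pointwise
/-- A submodule `N` of `M` is `S`-idempotent if there is `s ∈ S` with
`s • N ⊆ (N :_R M)² M ⊆ N`. -/
def Submodule.SIdempotent {R M : Type*} [CommRing R] [AddCommGroup M] [Module R M]
    (S : Submonoid R) (N : Submodule R M) : Prop :=
  ∃ s ∈ S, s • N ≤ (N.colon ⊤) ^ 2 • (⊤ : Submodule R M) ∧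
    (N.colon ⊤) ^ 2 • (⊤ : Submodule R M) ≤ N

/-- `M` is fully `S`-idempotent if every submodule is `S`-idempotent. -/
def Module.FullySIdempotent (R M : Type*) [CommRing R] [AddCommGroup M] [Module R M]
    (S : Submonoid R) : Prop :=
  ∀ N : Submodule R M, N.SIdempotent S

/-- `M` is fully idempotent if every submodule `N` equals `(N :_R M)² M`. -/
def Module.FullyIdempotent (R M : Type*) [CommRing R] [AddCommGroup M] [Module R M] : Prop :=
  ∀ N : Submodule R M, N = (N.colon ⊤) ^ 2 • (⊤ : Submodule R M)

/-- The Prüfer `p`-group `ℤ(p^∞)`, realized as the subgroup of `ℚ/ℤ` consisting of the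
elements annihilated by a power of `p`. -/
def pruferGroup (p : ℕ) : Submodule ℤ (ℚ ⧸ Submodule.span ℤ {(1 : ℚ)}) where
  carrier := {x | ∃ n : ℕ, (p : ℤ) ^ n • x = 0}
  zero_mem' := ⟨0, smul_zero _⟩
  add_mem' := fun {x y} hx hy => by
    obtain ⟨n, hn⟩ := hx
    obtain ⟨m, hm⟩ := hy
    exact ⟨n + m, by
      rw [smul_add, pow_add, mul_smul, mul_smul, smul_comm ((p : ℤ) ^ n) ((p : ℤ) ^ m) x, hn, hm,
        smul_zero, smul_zero, add_zero]⟩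
  smul_mem' := fun c x hx => by
    obtain ⟨n, hn⟩ := hx
    exact ⟨n, by rw [smul_comm, hn, smul_zero]⟩

section Aux

/-- The projection `ℚ → ℚ/ℤ`. -/
noncomputable def pfπ : ℚ →ₗ[ℤ] (ℚ ⧸ Submodule.span ℤ {(1 : ℚ)}) :=
  (Submodule.span ℤ {(1 : ℚ)}).mkQ

lemma pfπ_eq_zero_iff (q : ℚ) : pfπ q = 0 ↔ ∃ a : ℤ, (a : ℚ) = q := by
  rw [pfπ, Submodule.mkQ_apply, Submodule.Quotient.mk_eq_zero, Submodule.mem_span_singleton]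
  simp

lemma pfπ_intCast (a : ℤ) : pfπ (a : ℚ) = 0 := (pfπ_eq_zero_iff _).mpr ⟨a, rfl⟩

lemma pfπ_surjective : Function.Surjective pfπ := Submodule.mkQ_surjective _

lemma mem_pruferGroup {p : ℕ} {x : ℚ ⧸ Submodule.span ℤ {(1 : ℚ)}} :
    x ∈ pruferGroup p ↔ ∃ n : ℕ, (p : ℤ) ^ n • x = 0 := Iff.rfl

variable {p : ℕ} (hp : p.Prime)

include hp

lemma pfπ_div_mem (a : ℤ) (n : ℕ) : pfπ ((a : ℚ) / (p : ℚ) ^ n) ∈ pruferGroup p := by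
  refine ⟨n, ?_⟩
  rw [← map_smul]
  have : (p : ℤ) ^ n • ((a : ℚ) / (p : ℚ) ^ n) = (a : ℚ) := by
    have hp0 : (p : ℚ) ≠ 0 := Nat.cast_ne_zero.mpr hp.ne_zero
    rw [zsmul_eq_mul]
    push_cast
    field_simp
  rw [this, pfπ_intCast]

/-- every element of the Prüfer group is `π (a / p^n)` for some `a, n`. -/
lemma exists_rep (x : pruferGroup p) :
    ∃ (a : ℤ) (n : ℕ), (x : ℚ ⧸ Submodule.span ℤ {(1 : ℚ)}) = pfπ ((a : ℚ) / (p : ℚ) ^ n) := by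
  obtain ⟨n, hn⟩ := x.2
  obtain ⟨q, hq⟩ := pfπ_surjective (x : ℚ ⧸ Submodule.span ℤ {(1 : ℚ)})
  rw [← hq, ← map_smul, pfπ_eq_zero_iff] at hn
  obtain ⟨a, ha⟩ := hn
  refine ⟨a, n, ?_⟩
  rw [← hq]
  congr 1
  have hp0 : (p : ℚ) ^ n ≠ 0 := pow_ne_zero _ (Nat.cast_ne_zero.mpr hp.ne_zero)
  rw [zsmul_eq_mul] at ha
  push_cast at ha ⊢
  field_simp
  linarith [ha]

/-- a reduced representation for nonzero elements. -/
lemma exists_rep' (x : pruferGroup p) (hx : x ≠ 0) :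
    ∃ (a : ℤ) (n : ℕ), ¬ (p : ℤ) ∣ a ∧
      (x : ℚ ⧸ Submodule.span ℤ {(1 : ℚ)}) = pfπ ((a : ℚ) / (p : ℚ) ^ n) := by
  obtain ⟨a, n, h⟩ := exists_rep hp x
  induction n generalizing a with
  | zero =>
    exfalso
    apply hx
    ext
    rw [h]
    simp only [pow_zero, div_one, pfπ_intCast, Submodule.coe_zero, ZeroMemClass.coe_zero]
  | succ n ih =>
    by_cases hd : (p : ℤ) ∣ a
    · obtain ⟨b, rfl⟩ := hd
      refine ih b ?_
      rw [h]
      congr 1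
      have hp0 : (p : ℚ) ≠ 0 := Nat.cast_ne_zero.mpr hp.ne_zero
      push_cast
      field_simp
      ring
    · exact ⟨a, n + 1, hd, h⟩

/-- key absorption: if `N` contains an element with reduced denominator `p^m`, then `N`
contains every element killed by `p^m`. -/
lemma layer_le (N : Submodule ℤ (pruferGroup p)) (y : pruferGroup p) (hyN : y ∈ N)
    (c : ℤ) (m : ℕ) (hc : ¬ (p : ℤ) ∣ c)
    (hy : (y : ℚ ⧸ Submodule.span ℤ {(1 : ℚ)}) = pfπ ((c : ℚ) / (p : ℚ) ^ m))
    (x : pruferGroup p) (hx : (p : ℤ) ^ m • (x : ℚ ⧸ Submodule.span ℤ {(1 : ℚ)}) = 0) :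
    x ∈ N := by
  -- get Bezout:  u * p^m + v * c = 1
  have hcop : IsCoprime ((p : ℤ) ^ m) c :=
    (((Nat.prime_iff_prime_int.mp hp).coprime_iff_not_dvd).mpr hc).pow_left
  obtain ⟨u, v, huv⟩ := hcop
  -- x = π (a / p^m)
  obtain ⟨q, hq⟩ := pfπ_surjective (x : ℚ ⧸ Submodule.span ℤ {(1 : ℚ)})
  rw [← hq, ← map_smul, pfπ_eq_zero_iff] at hx
  obtain ⟨a, ha⟩ := hx
  have hp0 : (p : ℚ) ≠ 0 := Nat.cast_ne_zero.mpr hp.ne_zero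
  have hq' : q = (a : ℚ) / (p : ℚ) ^ m := by
    rw [zsmul_eq_mul] at ha
    push_cast at ha
    field_simp
    linarith [ha]
  -- claim x = (a * v) • y
  have h1 : ((u : ℚ)) * (p : ℚ) ^ m + (v : ℚ) * (c : ℚ) = 1 := by exact_mod_cast huv
  have key : x = (a * v) • y := by
    apply Subtype.ext
    rw [Submodule.coe_smul, hy, ← map_smul, ← hq, hq']
    have hmain : ((a * v : ℤ) • ((c : ℚ) / (p : ℚ) ^ m)) - (a : ℚ) / (p : ℚ) ^ m
        = ((- (a * u) : ℤ) : ℚ) := by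
      rw [zsmul_eq_mul]
      push_cast
      have hpm : (p : ℚ) ^ m ≠ 0 := pow_ne_zero m hp0
      field_simp
      linear_combination (a : ℚ) * h1
    have h2 : pfπ ((a * v : ℤ) • ((c : ℚ) / (p : ℚ) ^ m)) = pfπ ((a : ℚ) / (p : ℚ) ^ m) := by
      rw [← sub_eq_zero, ← map_sub, hmain, pfπ_intCast]
    exact h2.symm
  rw [key]
  exact N.smul_mem _ hyN

/-- every proper submodule of the Prüfer group is bounded. -/
lemma bounded_of_ne_top (N : Submodule ℤ (pruferGroup p)) (hN : N ≠ ⊤) :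
    ∃ k : ℕ, ∀ y ∈ N, (p : ℤ) ^ k • y = 0 := by
  obtain ⟨x, hx⟩ : ∃ x : pruferGroup p, x ∉ N := by
    by_contra h
    push_neg at h
    exact hN (Submodule.eq_top_iff'.mpr h)
  obtain ⟨k, hk⟩ := x.2
  refine ⟨k, fun y hy => ?_⟩
  by_contra hy0
  have hyne : y ≠ 0 := by rintro rfl; exact hy0 (smul_zero _)
  obtain ⟨c, m, hc, hrep⟩ := exists_rep' hp y hyne
  -- p^m kills y
  have hym : (p : ℤ) ^ m • (y : ℚ ⧸ Submodule.span ℤ {(1 : ℚ)}) = 0 := by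
    rw [hrep, ← map_smul]
    have : (p : ℤ) ^ m • ((c : ℚ) / (p : ℚ) ^ m) = (c : ℚ) := by
      have hp0 : (p : ℚ) ≠ 0 := Nat.cast_ne_zero.mpr hp.ne_zero
      rw [zsmul_eq_mul]; push_cast; field_simp
    rw [this, pfπ_intCast]
  -- hence m > k
  have hmk : k ≤ m := by
    by_contra h
    push_neg at h
    apply hy0
    have : (p : ℤ) ^ k = (p : ℤ) ^ (k - m) * (p : ℤ) ^ m := by
      rw [← pow_add]; congr 1; omega
    ext
    rw [this, mul_smul, Submodule.coe_smul, Submodule.coe_smul, hym, smul_zero]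
    rfl
  -- x is killed by p^m
  have hxm : (p : ℤ) ^ m • (x : ℚ ⧸ Submodule.span ℤ {(1 : ℚ)}) = 0 := by
    have : (p : ℤ) ^ m = (p : ℤ) ^ (m - k) * (p : ℤ) ^ k := by
      rw [← pow_add]; congr 1; omega
    rw [this, mul_smul]
    rw [hk, smul_zero]
  exact hx (layer_le hp N y hy c m hc hrep x hxm)

end Aux

/-- The Prüfer group `ℤ(p^∞)` is a fully `S`-idempotent `ℤ`-module for
`S = {pⁿ : n ∈ ℕ}`, but it is not a fully idempotent `ℤ`-module. -/
theorem pruferGroup_fullySIdempotent_not_fullyIdempotent (p : ℕ) (hp : p.Prime) :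
    Module.FullySIdempotent ℤ (pruferGroup p) (Submonoid.powers (p : ℤ)) ∧
      ¬ Module.FullyIdempotent ℤ (pruferGroup p) := by
  have hp0 : (p : ℚ) ≠ 0 := Nat.cast_ne_zero.mpr hp.ne_zero
  constructor
  · intro N
    -- right inclusion is always true
    have hright : (N.colon ⊤) ^ 2 • (⊤ : Submodule ℤ (pruferGroup p)) ≤ N := by
      calc (N.colon ⊤) ^ 2 • (⊤ : Submodule ℤ (pruferGroup p))
          ≤ (N.colon ⊤) • (⊤ : Submodule ℤ (pruferGroup p)) :=
            Submodule.smul_mono_left (Ideal.pow_le_self two_ne_zero)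
        _ ≤ N := Submodule.smul_le.mpr fun r hr n hn => Submodule.mem_colon.mp hr n hn
    by_cases hN : N = ⊤
    · refine ⟨1, ⟨0, pow_zero _⟩, ?_, hright⟩
      have hcolon : N.colon ⊤ = ⊤ := by
        rw [eq_top_iff]
        exact fun r _ => Submodule.mem_colon.mpr fun x _ => hN ▸ Submodule.mem_top
      rw [hcolon]
      simp only [one_pow, Ideal.top_pow, Submodule.top_smul, hN]
      intro x hx
      obtain ⟨n, hn, rfl⟩ := Set.mem_smul_set.mp hx
      exact Submodule.mem_top
    · obtain ⟨k, hk⟩ := bounded_of_ne_top hp N hN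
      refine ⟨(p : ℤ) ^ k, ⟨k, rfl⟩, ?_, hright⟩
      intro x hx
      obtain ⟨n, hn, rfl⟩ := Set.mem_smul_set.mp hx
      rw [hk n hn]
      exact Submodule.zero_mem _
  · intro h
    -- x₀ = π (1/p)
    have hmem : pfπ ((1 : ℚ) / (p : ℚ) ^ 1) ∈ pruferGroup p := by
      have := pfπ_div_mem hp 1 1
      rwa [Int.cast_one] at this
    set x₀ : pruferGroup p := ⟨pfπ ((1 : ℚ) / (p : ℚ) ^ 1), hmem⟩ with hx₀
    have hx₀ne : x₀ ≠ 0 := by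
      intro h0
      have : pfπ ((1 : ℚ) / (p : ℚ) ^ 1) = 0 := congrArg Subtype.val h0
      rw [pfπ_eq_zero_iff] at this
      obtain ⟨a, ha⟩ := this
      have hap : (a * p : ℤ) = 1 := by
        have : (a : ℚ) * (p : ℚ) = 1 := by
          rw [pow_one] at ha
          field_simp [hp0] at ha
          linarith [ha]
        exact_mod_cast this
      have hdvd : (p : ℤ) ∣ 1 := Dvd.intro_left a hap
      have := Int.le_of_dvd one_pos hdvd
      have h2 := hp.two_le
      omega
    set N : Submodule ℤ (pruferGroup p) := Submodule.span ℤ {x₀} with hNdef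
    -- every element of N is killed by p
    have hpx₀ : (p : ℤ) • x₀ = 0 := by
      apply Subtype.ext
      rw [Submodule.coe_smul]
      show (p : ℤ) • pfπ ((1 : ℚ) / (p : ℚ) ^ 1) = ((0 : pruferGroup p) : _)
      rw [← map_smul]
      have : (p : ℤ) • ((1 : ℚ) / (p : ℚ) ^ 1) = ((1 : ℤ) : ℚ) := by
        rw [zsmul_eq_mul, pow_one]; push_cast; field_simp
      rw [this, pfπ_intCast]
      simp
    have hNkill : ∀ y ∈ N, (p : ℤ) • y = 0 := by
      intro y hy
      rw [hNdef, Submodule.mem_span_singleton] at hy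
      obtain ⟨a, rfl⟩ := hy
      rw [smul_comm, hpx₀, smul_zero]
    -- the colon ideal is ⊥
    have hcolon : N.colon ⊤ = ⊥ := by
      rw [eq_bot_iff]
      intro r hr
      rw [Submodule.mem_colon] at hr
      rw [Ideal.mem_bot]
      by_contra hr0
      -- p * r annihilates everything
      have hann : ∀ x : pruferGroup p, ((p : ℤ) * r) • x = 0 := by
        intro x
        rw [mul_smul]
        exact hNkill _ (hr x (by simp))
      -- choose n with p^n > |p * r|
      obtain ⟨n, hn⟩ := pow_unbounded_of_one_lt (((p : ℤ) * r).natAbs) hp.one_lt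
      set t : ℤ := (p : ℤ) * r with ht
      have ht0 : t ≠ 0 := mul_ne_zero (by exact_mod_cast hp.ne_zero) hr0
      have := hann ⟨pfπ ((1 : ℚ) / (p : ℚ) ^ n), by
        have := pfπ_div_mem hp 1 n; rwa [Int.cast_one] at this⟩
      have hq : pfπ (t • ((1 : ℚ) / (p : ℚ) ^ n)) = 0 := by
        rw [map_smul]
        have h' := congrArg Subtype.val this
        rw [Submodule.coe_smul] at h'
        simpa using h'
      rw [pfπ_eq_zero_iff] at hq
      obtain ⟨a, ha⟩ := hq
      have heq : (a : ℚ) * (p : ℚ) ^ n = (t : ℚ) := by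
        rw [zsmul_eq_mul] at ha
        field_simp at ha
        linarith [ha]
      have heqz : a * (p : ℤ) ^ n = t := by exact_mod_cast heq
      have ha0 : a ≠ 0 := by rintro rfl; simp at heqz; exact ht0 heqz.symm
      have : (p : ℤ) ^ n ≤ t.natAbs := by
        calc ((p : ℤ)) ^ n ≤ |a| * (p : ℤ) ^ n := by
              nlinarith [Int.one_le_abs ha0, pow_pos (Int.natCast_pos.mpr hp.pos) n]
          _ = |a * (p : ℤ) ^ n| := by
              rw [abs_mul, abs_of_nonneg (pow_nonneg (Int.natCast_nonneg p) n)]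
          _ = (t.natAbs : ℤ) := by rw [heqz, Int.abs_eq_natAbs]
      have hlt : (t.natAbs : ℤ) < (p : ℤ) ^ n := by exact_mod_cast hn
      omega
    have hbad := h N
    rw [hcolon] at hbad
    have : N = ⊥ := by
      rw [hbad]
      rw [pow_two, Ideal.mul_bot, Submodule.bot_smul]
    have hx0N : x₀ ∈ N := by rw [hNdef]; exact Submodule.mem_span_singleton_self x₀
    rw [this, Submodule.mem_bot] at hx0N
    exact hx₀ne hx0N
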